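/- Let B be a finite nonempty set of monomials in n variables. There exists an order ideal O with ∂O = B if and only if every t ∈ B satisfies: (1) for all variables x, y with x | t and y ≠ x, at least one of t·y, (t·y)/x, t/x lies in B; (2) there exists a variable x with x | t and t/x ∉ B; (3) for all monomials t', t'' with t' ∈ B, t' | t'', t'' | t, one has t'' ∈ B. -/

import Mathlib

namespace BBD

open Finsupp

variable {σ : Type*}

/-- `t'` is a child of `t`: `t' · y = t` for some variable `y`. -/
def isChild (t' t : σ →₀ ℕ) : Prop := ∃ y : σ, t' + Finsupp.single y 1 = t

/-- The set of children of a monomial `t`. -/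
def children (t : σ →₀ ℕ) : Set (σ →₀ ℕ) := {t' | isChild t' t}

/-- The children of a set of monomials. -/
def childrenSet (S : Set (σ →₀ ℕ)) : Set (σ →₀ ℕ) := ⋃ s ∈ S, children s

/-- The set of parents of a monomial `t`. -/
def parents (t : σ →₀ ℕ) : Set (σ →₀ ℕ) := {t' | isChild t t'}

/-- An order ideal: a nonempty finite set of monomials closed under divisibility. -/
def IsOrderIdeal (O : Set (σ →₀ ℕ)) : Prop :=
  O.Finite ∧ O.Nonempty ∧ ∀ t ∈ O, ∀ t', t' ≤ t → t' ∈ O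

/-- The border of a set of monomials: `(T₁ · O) \ O`. -/
def borderOf (O : Set (σ →₀ ℕ)) : Set (σ →₀ ℕ) :=
  {t | t ∉ O ∧ ∃ t' ∈ O, ∃ y : σ, t = t' + Finsupp.single y 1}

/-- Any divisor of a border element which is not in `O` is itself in the border. -/
lemma aux_border (O : Set (σ →₀ ℕ)) (hcl : ∀ t ∈ O, ∀ t', t' ≤ t → t' ∈ O)
    {t s : σ →₀ ℕ} (ht : t ∈ borderOf O) (hs : s ≤ t) (hsO : s ∉ O) : s ∈ borderOf O := by
  classical
  obtain ⟨htO, t', ht', y, rfl⟩ := ht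
  have h1 : ¬ s ≤ t' := fun h => hsO (hcl t' ht' s h)
  rw [Finsupp.le_def] at h1; push_neg at h1
  obtain ⟨z, hz⟩ := h1
  have hsz : s z ≤ t' z + (Finsupp.single y 1) z := by
    simpa [Finsupp.add_apply] using (Finsupp.le_def.mp hs z)
  have hyz : y = z := by
    by_contra hne
    simp [Finsupp.single_apply, hne] at hsz; omega
  subst hyz
  have hys : Finsupp.single y 1 ≤ s := Finsupp.single_le_iff.mpr (by omega)
  refine ⟨hsO, s - Finsupp.single y 1, ?_, y, (tsub_add_cancel_of_le hys).symm⟩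
  apply hcl t' ht'
  rw [Finsupp.le_def]; intro i
  simp only [Finsupp.tsub_apply, Finsupp.single_apply]
  have hle := Finsupp.le_def.mp hs i
  simp only [Finsupp.add_apply, Finsupp.single_apply] at hle
  rcases eq_or_ne y i with rfl | hyi
  · rw [if_pos rfl]; rw [if_pos rfl] at hle; omega
  · rw [if_neg hyi]; rw [if_neg hyi] at hle; omega

/-- Key lemma for the backward direction. -/
lemma key [Fintype σ] {B : Set (σ →₀ ℕ)}
    (h1 : ∀ t ∈ B, ∀ x y : σ, Finsupp.single x 1 ≤ t → y ≠ x →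
      (t + Finsupp.single y 1 ∈ B ∨ t + Finsupp.single y 1 - Finsupp.single x 1 ∈ B ∨
        t - Finsupp.single x 1 ∈ B)) :
    ∀ n (u : σ →₀ ℕ), (∑ i, u i) ≤ n → u ∈ B → ∀ s, s ≤ u → s ∉ B →
      ∀ y : σ, ∃ v ∈ B, s + Finsupp.single y 1 ≤ v := by
  classical
  intro n
  induction n with
  | zero =>
    intro u hdeg hu s hsu hs y
    have hu0 : u = 0 := by
      ext i
      exact Nat.le_zero.mp (le_trans
        (Finset.single_le_sum (f := fun i => u i) (fun _ _ => Nat.zero_le _)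
          (Finset.mem_univ i)) hdeg)
    have hs0 : s = 0 := le_antisymm (hu0 ▸ hsu) zero_le
    rw [hu0] at hu; rw [hs0] at hs
    exact absurd hu hs
  | succ n ih =>
    intro u hdeg hu s hsu hs y
    have hne : s ≠ u := fun h => hs (h ▸ hu)
    obtain ⟨x, hx⟩ : ∃ x, s x < u x := by
      by_contra hc; push_neg at hc
      exact hne (le_antisymm hsu (Finsupp.le_def.mpr hc))
    by_cases hy : s y < u y
    · refine ⟨u, hu, ?_⟩
      rw [Finsupp.le_def]; intro i
      have hui := Finsupp.le_def.mp hsu i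
      simp only [Finsupp.add_apply, Finsupp.single_apply]
      rcases eq_or_ne y i with rfl | hyi
      · rw [if_pos rfl]; omega
      · rw [if_neg hyi]; omega
    · have hyeq : u y = s y := le_antisymm (not_lt.mp hy) (Finsupp.le_def.mp hsu y)
      have hxy : y ≠ x := by rintro rfl; omega
      have hxu : Finsupp.single x 1 ≤ u := Finsupp.single_le_iff.mpr (by omega)
      rcases h1 u hu x y hxu hxy with h | h | h
      · exact ⟨_, h, add_le_add hsu le_rfl⟩
      · refine ⟨_, h, ?_⟩
        rw [Finsupp.le_def]; intro i
        have hui := Finsupp.le_def.mp hsu i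
        simp only [Finsupp.tsub_apply, Finsupp.add_apply, Finsupp.single_apply]
        rcases eq_or_ne x i with rfl | hxi
        · rw [if_pos rfl, if_neg hxy]; omega
        · rw [if_neg hxi]
          rcases eq_or_ne y i with rfl | hyi
          · rw [if_pos rfl]; omega
          · rw [if_neg hyi]; omega
      · have hle : ∀ i ∈ Finset.univ, ((u - Finsupp.single x 1 : σ →₀ ℕ)) i ≤ u i := by
          intro i _
          rw [Finsupp.tsub_apply]; exact Nat.sub_le _ _
        have hxlt : ((u - Finsupp.single x 1 : σ →₀ ℕ)) x < u x := by
          rw [Finsupp.tsub_apply, Finsupp.single_eq_same]; omega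
        have hlt : ∑ i, ((u - Finsupp.single x 1 : σ →₀ ℕ)) i < ∑ i, u i :=
          Finset.sum_lt_sum hle ⟨x, Finset.mem_univ x, hxlt⟩
        have hsle : s ≤ u - Finsupp.single x 1 := by
          rw [Finsupp.le_def]; intro i
          have hui := Finsupp.le_def.mp hsu i
          simp only [Finsupp.tsub_apply, Finsupp.single_apply]
          rcases eq_or_ne x i with rfl | hxi
          · rw [if_pos rfl]; omega
          · rw [if_neg hxi]; omega
        exact ih _ (by omega) h s hsle hs y


theorem exists_orderIdeal_iff_three_conditions [Fintype σ] (B : Set (σ →₀ ℕ))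
    (hfin : B.Finite) (hne : B.Nonempty) :
    (∃ O : Set (σ →₀ ℕ), IsOrderIdeal O ∧ borderOf O = B) ↔
      (∀ t ∈ B,
        (∀ x y : σ, Finsupp.single x 1 ≤ t → y ≠ x →
          (t + Finsupp.single y 1 ∈ B ∨ t + Finsupp.single y 1 - Finsupp.single x 1 ∈ B ∨
            t - Finsupp.single x 1 ∈ B)) ∧
        (∃ x : σ, Finsupp.single x 1 ≤ t ∧ t - Finsupp.single x 1 ∉ B) ∧
        (∀ t1 t2 : σ →₀ ℕ, t1 ∈ B → t1 ≤ t2 → t2 ≤ t → t2 ∈ B)) := by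
  constructor
  · rintro ⟨O, ⟨hOfin, hOne, hOcl⟩, rfl⟩
    intro t ht
    obtain ⟨htO, t', ht', y', hty⟩ := id ht
    refine ⟨?_, ?_, ?_⟩
    · intro x y hxt hyx
      by_cases h1 : t - Finsupp.single x 1 ∈ O
      · by_cases h2 : t - Finsupp.single x 1 + Finsupp.single y 1 ∈ O
        · left
          refine ⟨?_, _, h2, x, ?_⟩
          · intro hO; exact htO (hOcl _ hO t (self_le_add_right t _))
          · rw [add_right_comm, tsub_add_cancel_of_le hxt]
        · right; left
          have heq : t + Finsupp.single y 1 - Finsupp.single x 1 =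
              t - Finsupp.single x 1 + Finsupp.single y 1 := by
            rw [tsub_add_eq_add_tsub hxt]
          have hmem : t - Finsupp.single x 1 + Finsupp.single y 1 ∈ borderOf O :=
            ⟨h2, _, h1, y, rfl⟩
          rwa [← heq] at hmem
      · right; right
        exact aux_border O hOcl ht tsub_le_self h1
    · refine ⟨y', ?_, ?_⟩
      · rw [hty]; exact le_add_self
      · have hteq : t - Finsupp.single y' 1 = t' := by rw [hty, add_tsub_cancel_right]
        rw [hteq]
        intro hb; exact hb.1 ht'
    · intro t1 t2 h1 h12 h2t
      by_cases h2 : t2 ∈ O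
      · exact absurd (hOcl t2 h2 t1 h12) h1.1
      · exact aux_border O hOcl ht h2t h2
  · intro hB
    refine ⟨{s | s ∉ B ∧ ∃ u ∈ B, s ≤ u}, ⟨?_, ?_, ?_⟩, ?_⟩
    · apply Set.Finite.subset (hfin.biUnion (fun u _ => show (Set.Iic u).Finite from by
        classical exact (Set.finite_Icc 0 u).subset (fun s hs => ⟨zero_le, hs⟩)))
      rintro s ⟨-, u, hu, hsu⟩
      exact Set.mem_biUnion hu hsu
    · refine ⟨0, ?_, ?_⟩
      · intro h0
        obtain ⟨x, hx, -⟩ := (hB 0 h0).2.1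
        simpa using Finsupp.le_def.mp hx x
      · obtain ⟨u, hu⟩ := hne; exact ⟨u, hu, zero_le⟩
    · rintro t ⟨htB, u, hu, htu⟩ t' ht't
      refine ⟨?_, u, hu, ht't.trans htu⟩
      intro ht'B
      exact htB ((hB u hu).2.2 t' t ht'B ht't htu)
    · ext t
      constructor
      · rintro ⟨htO, s, ⟨hsB, u, hu, hsu⟩, y, rfl⟩
        by_contra htB
        obtain ⟨v, hv, hle⟩ :=
          key (fun t ht => (hB t ht).1) (∑ i, u i) u le_rfl hu s hsu hsB y
        exact htO ⟨htB, v, hv, hle⟩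
      · intro htB
        obtain ⟨x, hx, hxB⟩ := (hB t htB).2.1
        exact ⟨fun h => h.1 htB, t - Finsupp.single x 1, ⟨hxB, t, htB, tsub_le_self⟩,
          x, (tsub_add_cancel_of_le hx).symm⟩

end BBD
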